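/- Let f be a nonnegative integer and set m = 2f + 1. Let G₀ be the complete simple graph on m vertices, and let G₀, G₁, …, G_k be a sequence of simple graphs in which each G_{j+1} is obtained from G_j by adding one new vertex together with edges from it to an m-element set of vertices of G_j (the Graph Extension Scheme). Then the final graph G_k has vertex-connectivity at least m = 2f + 1, i.e., for every set S of vertices of G_k with |S| ≤ 2f, the subgraph of G_k induced on the complement of S is connected. -/

import Mathlib

/-- The Graph Extension Scheme: extend a graph `G` on `V` by one new vertex
(`none` in `Option V`) joined by edges to each vertex of the set `T`. -/
def extendGraph {V : Type*} (G : SimpleGraph V) (T : Finset V) :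
    SimpleGraph (Option V) where
  Adj x y :=
    match x, y with
    | some a, some b => G.Adj a b
    | some a, none => a ∈ T
    | none, some b => b ∈ T
    | none, none => False
  symm := by
    constructor
    rintro (_ | a) (_ | b) h
    · exact h
    · exact h
    · exact h
    · exact G.adj_symm h
  loopless := by
    constructor
    rintro (_ | a) h
    · exact h
    · exact G.irrefl h

/-- The vertex type after `k` applications of the Graph Extension Scheme:
each application adds one new vertex (`none`). -/
def OptIter (V : Type) : ℕ → Type
  | 0 => V
  | n + 1 => Option (OptIter V n)

/-- **Correctness of Algorithms 2 and 3.** Let `m = 2f + 1`, let `G 0` be the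
complete graph on `m` vertices, and let each `G (j+1)` (for `j < k`) be
obtained from `G j` by the Graph Extension Scheme, i.e. by adding one new
vertex joined to an `m`-element set of vertices of `G j`. Then the final
graph `G k` has vertex-connectivity at least `m = 2f + 1`: deleting any set
`S` of at most `2f` vertices leaves a connected induced subgraph. -/
lemma extend_step {V : Type*} (f : ℕ) (G : SimpleGraph V)
    (hG : ∀ S : Finset V, S.card ≤ 2*f → (G.induce ((↑S : Set V)ᶜ)).Connected)
    (T : Finset V) (hT : T.card = 2*f+1)
    (S : Finset (Option V)) (hS : S.card ≤ 2*f) :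
    ((extendGraph G T).induce ((↑S : Set (Option V))ᶜ)).Connected := by
  classical
  set S' : Finset V := S.preimage some (Option.some_injective V).injOn with hS'def
  have hmem : ∀ a : V, a ∈ S' ↔ some a ∈ S := fun a => Finset.mem_preimage
  have hcard : S'.card ≤ 2*f := by
    have h1 : S'.card = (S'.image some).card :=
      (Finset.card_image_of_injective _ (Option.some_injective V)).symm
    rw [h1]
    refine le_trans (Finset.card_le_card ?_) hS
    intro x hx
    simp only [Finset.mem_image] at hx
    obtain ⟨a, ha, rfl⟩ := hx
    exact (hmem a).mp ha
  have hconn := hG S' hcard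
  let F : G.induce ((↑S' : Set V)ᶜ) →g (extendGraph G T).induce ((↑S : Set (Option V))ᶜ) :=
    { toFun := fun x => ⟨some x.1, by
        have h2 := x.2
        simp only [Set.mem_compl_iff, Finset.mem_coe] at h2 ⊢
        exact fun h => h2 ((hmem _).mpr h)⟩
      map_rel' := fun h => h }
  have hsome : ∀ (a b : V) (ha : some a ∈ ((↑S : Set (Option V))ᶜ))
      (hb : some b ∈ ((↑S : Set (Option V))ᶜ)),
      ((extendGraph G T).induce ((↑S : Set (Option V))ᶜ)).Reachable ⟨some a, ha⟩ ⟨some b, hb⟩ := by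
    intro a b ha hb
    have ha' : a ∈ ((↑S' : Set V)ᶜ) := by
      simp only [Set.mem_compl_iff, Finset.mem_coe] at ha ⊢
      exact fun h => ha ((hmem _).mp h)
    have hb' : b ∈ ((↑S' : Set V)ᶜ) := by
      simp only [Set.mem_compl_iff, Finset.mem_coe] at hb ⊢
      exact fun h => hb ((hmem _).mp h)
    have := (hconn.preconnected ⟨a, ha'⟩ ⟨b, hb'⟩).map F
    exact this
  rw [SimpleGraph.connected_iff]
  constructor
  · -- preconnected
    have hex : ∃ t, t ∈ T ∧ t ∉ S' := by
      by_contra h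
      push_neg at h
      have : T ⊆ S' := fun t ht => h t ht
      have := Finset.card_le_card this
      omega
    rintro ⟨(_ | a), hx⟩ ⟨(_ | b), hy⟩
    · exact SimpleGraph.Reachable.refl _
    · obtain ⟨t, htT, htS⟩ := hex
      have hts : some t ∈ ((↑S : Set (Option V))ᶜ) := by
        simp only [Set.mem_compl_iff, Finset.mem_coe]
        exact fun h => htS ((hmem _).mpr h)
      have hadj : ((extendGraph G T).induce ((↑S : Set (Option V))ᶜ)).Adj ⟨none, hx⟩ ⟨some t, hts⟩ := htT
      exact hadj.reachable.trans (hsome t b hts hy)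
    · obtain ⟨t, htT, htS⟩ := hex
      have hts : some t ∈ ((↑S : Set (Option V))ᶜ) := by
        simp only [Set.mem_compl_iff, Finset.mem_coe]
        exact fun h => htS ((hmem _).mpr h)
      have hadj : ((extendGraph G T).induce ((↑S : Set (Option V))ᶜ)).Adj ⟨some t, hts⟩ ⟨none, hy⟩ := htT
      exact (hsome a t hx hts).trans hadj.reachable
    · exact hsome a b hx hy
  · -- nonempty
    obtain ⟨⟨a, ha⟩⟩ := hconn.nonempty
    exact ⟨⟨some a, by
      simp only [Set.mem_compl_iff, Finset.mem_coe] at ha ⊢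
      exact fun h => ha ((hmem _).mpr h)⟩⟩

lemma top_step (f : ℕ) (S : Finset (Fin (2*f+1))) (hS : S.card ≤ 2*f) :
    ((⊤ : SimpleGraph (Fin (2*f+1))).induce ((↑S : Set (Fin (2*f+1)))ᶜ)).Connected := by
  classical
  have hne : ∃ a : Fin (2*f+1), a ∉ S := by
    by_contra h
    push_neg at h
    have : (Finset.univ : Finset (Fin (2*f+1))) ⊆ S := fun a _ => h a
    have := Finset.card_le_card this
    simp at this
    omega
  obtain ⟨a, ha⟩ := hne
  rw [SimpleGraph.connected_iff]
  refine ⟨?_, ⟨⟨a, by simpa using ha⟩⟩⟩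
  rintro ⟨x, hx⟩ ⟨y, hy⟩
  by_cases hxy : x = y
  · subst hxy; exact SimpleGraph.Reachable.refl _
  · exact SimpleGraph.Adj.reachable (by simpa [Subtype.ext_iff] using hxy)

theorem graphExtensionSequence_vertexConnectivity (f k : ℕ)
    (G : ∀ j : ℕ, SimpleGraph (OptIter (Fin (2 * f + 1)) j))
    (h0 : G 0 = (⊤ : SimpleGraph (OptIter (Fin (2 * f + 1)) 0)))
    (hstep : ∀ j, j < k → ∃ T : Finset (OptIter (Fin (2 * f + 1)) j),
      T.card = 2 * f + 1 ∧ G (j + 1) = extendGraph (G j) T)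
    (S : Finset (OptIter (Fin (2 * f + 1)) k)) (hS : S.card ≤ 2 * f) :
    ((G k).induce ((↑S : Set (OptIter (Fin (2 * f + 1)) k))ᶜ)).Connected := by
  induction k with
  | zero =>
    rw [h0]
    exact top_step f S hS
  | succ n ih =>
    obtain ⟨T, hT, hGe⟩ := hstep n (Nat.lt_succ_self n)
    rw [hGe]
    exact extend_step f (G n)
      (fun S' hS' => ih (fun j hj => hstep j (Nat.lt_succ_of_lt hj)) S' hS') T hT S hS
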